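/- Every CA-AG-band is a commutative semigroup; that is, if a magma S satisfies the left invertive law, cyclic associativity, and every element is idempotent (a·a = a for all a), then S is commutative (a·b = b·a for all a,b) and associative ((a·b)·c = a·(b·c) for all a,b,c). -/
import Mathlib


theorem CA_AG_band_is_commutative_semigroup {S : Type*} [Mul S]
    (li : ∀ a b c : S, (a * b) * c = (c * b) * a)
    (ca : ∀ a b c : S, a * (b * c) = c * (a * b))
    (idem : ∀ a : S, a * a = a) :
    (∀ a b : S, a * b = b * a) ∧
    (∀ a b c : S, (a * b) * c = a * (b * c)) := by
  have comm : ∀ a b : S, a * b = b * a := by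
    intro a b
    calc a * b = (a * a) * (b * b) := by rw [idem, idem]
      _ = b * (b * (a * a)) := (ca b b (a * a)).symm
      _ = b * (a * (b * a)) := by rw [ca b a a]
      _ = (b * a) * (b * a) := ca b a (b * a)
      _ = b * a := idem _
  refine ⟨comm, fun a b c => ?_⟩
  rw [li a b c, comm (c * b) a, comm c b]
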